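/- arXiv:0802.3317 — 6 statements merged into one kernel-verified Lean document; each statement's English description precedes it below -/
import Mathlib

section
/- For each fixed t > 0, the function g(t,p) = -((1+p)/p) · ln(1 + p - p·e^{2t}) is strictly monotone increasing in p on the interval p < (e^{2t}-1)^{-1}, p ≠ 0, satisfies g(t,-1) = 0, and tends to -∞ as p → -∞. -/
open Real Filter Set Topology

private lemma aux_inner_deriv (E p : ℝ) : HasDerivAt (fun p : ℝ => 1 + p - p * E) (1 - E) p := by
  simpa using ((hasDerivAt_id p).const_add 1).fun_sub ((hasDerivAt_id p).mul_const E)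

private lemma aux_hasDeriv {E p : ℝ} (hp0 : p ≠ 0) (hX : (0:ℝ) < 1 + p - p * E) :
    HasDerivAt (fun p : ℝ => -((1 + p) / p) * Real.log (1 + p - p * E))
      ((Real.log (1 + p - p * E) + (E - 1) * p * (1 + p) / (1 + p - p * E)) / p ^ 2) p := by
  have h1 : HasDerivAt (fun p : ℝ => -((1 + p) / p)) (-((1 * p - (1 + p) * 1) / p ^ 2)) p :=
    (((hasDerivAt_id p).const_add 1).div (hasDerivAt_id p) hp0).neg
  have h3 : HasDerivAt (fun p : ℝ => Real.log (1 + p - p * E))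
      ((1 - E) / (1 + p - p * E)) p := (aux_inner_deriv E p).log (ne_of_gt hX)
  have := h1.fun_mul h3
  refine this.congr_deriv ?_
  field_simp
  ring

private lemma aux_deriv_pos {E p : ℝ} (hE : 1 < E) (hp0 : p ≠ 0) (hX : (0:ℝ) < 1 + p - p * E) :
    0 < (Real.log (1 + p - p * E) + (E - 1) * p * (1 + p) / (1 + p - p * E)) / p ^ 2 := by
  have hp2 : 0 < p ^ 2 := lt_of_le_of_ne (sq_nonneg p) (Ne.symm (pow_ne_zero 2 hp0))
  have hlog : 1 - (1 + p - p * E)⁻¹ ≤ Real.log (1 + p - p * E) := by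
    have h := Real.log_le_sub_one_of_pos (inv_pos.mpr hX)
    rw [Real.log_inv] at h
    linarith
  have hnum : Real.log (1 + p - p * E) + (E - 1) * p * (1 + p) / (1 + p - p * E)
      = (Real.log (1 + p - p * E) - (1 - (1 + p - p * E)⁻¹)) + (E - 1) * p ^ 2 / (1 + p - p * E) := by
    field_simp
    ring
  have hpos : 0 < (E - 1) * p ^ 2 / (1 + p - p * E) :=
    div_pos (mul_pos (by linarith) hp2) hX
  rw [hnum]
  apply div_pos _ hp2
  linarith

private lemma aux_tendsto (E : ℝ) :
    Tendsto (fun p : ℝ => -((1 + p) / p) * Real.log (1 + p - p * E)) (𝓝[≠] (0:ℝ)) (𝓝 (E - 1)) := by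
  have hL : HasDerivAt (fun x : ℝ => Real.log (1 + x - x * E)) (1 - E) 0 := by
    have := (aux_inner_deriv E 0).log (by norm_num)
    simpa using this
  have hs := hasDerivAt_iff_tendsto_slope.mp hL
  have hm : Tendsto (fun x : ℝ => -(1 + x)) (𝓝[≠] (0:ℝ)) (𝓝 (-1)) := by
    have : Tendsto (fun x : ℝ => -(1 + x)) (𝓝 (0:ℝ)) (𝓝 (-(1+0))) :=
      ((continuous_const.add continuous_id).neg).tendsto 0
    simpa using this.mono_left nhdsWithin_le_nhds
  have hmul := hm.mul hs
  have heq : (fun x : ℝ => -(1 + x) * slope (fun x : ℝ => Real.log (1 + x - x * E)) 0 x)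
      =ᶠ[𝓝[≠] (0:ℝ)] (fun p : ℝ => -((1 + p) / p) * Real.log (1 + p - p * E)) := by
    filter_upwards [self_mem_nhdsWithin] with x hx
    have hx0 : x ≠ 0 := hx
    simp only [slope_def_field, slope, vsub_eq_sub, sub_zero]
    norm_num
    ring
  have : (-1 : ℝ) * (1 - E) = E - 1 := by ring
  rw [this] at hmul
  exact hmul.congr' heq

theorem g_monotone_props (t : ℝ) (ht : 0 < t) :
    StrictMonoOn (fun p : ℝ => -((1 + p) / p) * Real.log (1 + p - p * Real.exp (2 * t)))
      {p : ℝ | p < (Real.exp (2 * t) - 1)⁻¹ ∧ p ≠ 0} ∧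
    -((1 + (-1 : ℝ)) / (-1)) * Real.log (1 + (-1) - (-1) * Real.exp (2 * t)) = 0 ∧
    Filter.Tendsto (fun p : ℝ => -((1 + p) / p) * Real.log (1 + p - p * Real.exp (2 * t)))
      Filter.atBot Filter.atBot := by
  set E := Real.exp (2 * t) with hEdef
  have hE : 1 < E := by
    rw [hEdef]
    calc (1:ℝ) = Real.exp 0 := by rw [Real.exp_zero]
    _ < Real.exp (2 * t) := Real.exp_lt_exp.mpr (by linarith)
  set f : ℝ → ℝ := fun p : ℝ => -((1 + p) / p) * Real.log (1 + p - p * E) with hfdef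
  have hEinv : 0 < (E - 1)⁻¹ := inv_pos.mpr (by linarith)
  -- positivity of log argument
  have hXneg : ∀ p : ℝ, p < 0 → 0 < 1 + p - p * E := by
    intro p hp; nlinarith
  have hXpos : ∀ p : ℝ, 0 < p → p < (E - 1)⁻¹ → 0 < 1 + p - p * E := by
    intro p hp hp'
    have := mul_lt_mul_of_pos_right hp' (show (0:ℝ) < E - 1 by linarith)
    rw [inv_mul_cancel₀ (by linarith : E - 1 ≠ 0)] at this
    nlinarith
  -- strict mono on Iio 0
  have hmono1 : StrictMonoOn f (Iio (0:ℝ)) := by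
    apply strictMonoOn_of_deriv_pos (convex_Iio 0)
    · intro x hx
      exact (aux_hasDeriv (ne_of_lt hx) (hXneg x hx)).continuousAt.continuousWithinAt
    · intro x hx
      rw [interior_Iio] at hx
      rw [(aux_hasDeriv (ne_of_lt hx) (hXneg x hx)).deriv]
      exact aux_deriv_pos hE (ne_of_lt hx) (hXneg x hx)
  -- strict mono on Ioo 0 (E-1)⁻¹
  have hmono2 : StrictMonoOn f (Ioo (0:ℝ) (E - 1)⁻¹) := by
    apply strictMonoOn_of_deriv_pos (convex_Ioo 0 _)
    · intro x hx
      exact (aux_hasDeriv (ne_of_gt hx.1) (hXpos x hx.1 hx.2)).continuousAt.continuousWithinAt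
    · intro x hx
      rw [interior_Ioo] at hx
      rw [(aux_hasDeriv (ne_of_gt hx.1) (hXpos x hx.1 hx.2)).deriv]
      exact aux_deriv_pos hE (ne_of_gt hx.1) (hXpos x hx.1 hx.2)
  -- bound: f p ≤ E - 1 for p < 0
  have hbd1 : ∀ p : ℝ, p < 0 → f p ≤ E - 1 := by
    intro p hp
    have hne : (𝓝[Ioo p 0] (0:ℝ)).NeBot := by
      apply mem_closure_iff_nhdsWithin_neBot.mp
      rw [closure_Ioo (ne_of_lt hp)]
      exact ⟨le_of_lt hp, le_refl 0⟩
    have ht1 : Tendsto f (𝓝[Ioo p 0] (0:ℝ)) (𝓝 (E - 1)) :=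
      (aux_tendsto E).mono_left (nhdsWithin_mono _ (fun x hx => ne_of_lt hx.2))
    refine ge_of_tendsto ht1 ?_
    filter_upwards [self_mem_nhdsWithin] with x hx
    exact le_of_lt (hmono1 hp hx.2 hx.1)
  -- bound: E - 1 ≤ f q for 0 < q < (E-1)⁻¹
  have hbd2 : ∀ q : ℝ, 0 < q → q < (E - 1)⁻¹ → E - 1 ≤ f q := by
    intro q hq hq'
    have hne : (𝓝[Ioo 0 q] (0:ℝ)).NeBot := by
      apply mem_closure_iff_nhdsWithin_neBot.mp
      rw [closure_Ioo hq.ne]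
      exact ⟨le_refl 0, le_of_lt hq⟩
    have ht1 : Tendsto f (𝓝[Ioo 0 q] (0:ℝ)) (𝓝 (E - 1)) :=
      (aux_tendsto E).mono_left (nhdsWithin_mono _ (fun x hx => ne_of_gt hx.1))
    refine le_of_tendsto ht1 ?_
    filter_upwards [self_mem_nhdsWithin] with x hx
    exact le_of_lt (hmono2 ⟨hx.1, lt_trans hx.2 hq'⟩ ⟨hq, hq'⟩ hx.2)
  refine ⟨?_, by norm_num, ?_⟩
  · -- strict mono on the whole set
    intro p hp q hq hpq
    simp only [mem_setOf_eq] at hp hq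
    rcases lt_or_gt_of_ne hq.2 with hq0 | hq0
    · exact hmono1 (lt_trans hpq hq0) hq0 hpq
    · rcases lt_or_gt_of_ne hp.2 with hp0 | hp0
      · -- p < 0 < q
        have h1 : f p < f (p/2) := hmono1 (Set.mem_Iio.mpr hp0)
          (Set.mem_Iio.mpr (by linarith)) (by linarith)
        have h2 : f (p/2) ≤ E - 1 := hbd1 (p/2) (by linarith)
        have h3 : E - 1 ≤ f q := hbd2 q hq0 hq.1
        linarith
      · exact hmono2 ⟨hp0, hp.1⟩ ⟨hq0, hq.1⟩ hpq
  · -- tendsto atBot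
    have h1 : Tendsto (fun p : ℝ => (1 + p) / p) atBot (𝓝 1) := by
      have hn : Tendsto (fun p : ℝ => -p) atBot atTop := tendsto_neg_atBot_atTop
      have hi : Tendsto (fun q : ℝ => q⁻¹) atTop (𝓝 (0:ℝ)) := tendsto_inv_atTop_zero
      have hinv0 : Tendsto (fun p : ℝ => (-p)⁻¹) atBot (𝓝 (0:ℝ)) := hi.comp hn
      have hinv : Tendsto (fun p : ℝ => -((-p)⁻¹)) atBot (𝓝 (-0:ℝ)) := hinv0.neg
      have h : Tendsto (fun p : ℝ => -((-p)⁻¹) + 1) atBot (𝓝 (-0 + 1)) :=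
        hinv.add tendsto_const_nhds
      rw [show (-(0:ℝ) + 1) = 1 by norm_num] at h
      refine h.congr' ?_
      filter_upwards [eventually_lt_atBot (0:ℝ)] with p hp
      have : p ≠ 0 := ne_of_lt hp
      field_simp
    have h2 : Tendsto (fun p : ℝ => 1 + p - p * E) atBot atTop := by
      have h : Tendsto (fun p : ℝ => (1 - E) * p + 1) atBot atTop := by
        apply tendsto_atTop_add_const_right
        exact (tendsto_const_mul_atTop_of_neg (by linarith)).mpr tendsto_id
      refine h.congr (fun p => by ring)
    have h3 : Tendsto (fun p : ℝ => Real.log (1 + p - p * E)) atBot atTop :=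
      Real.tendsto_log_atTop.comp h2
    have h4 : Tendsto (fun p : ℝ => (1 + p) / p * Real.log (1 + p - p * E)) atBot atTop :=
      h1.pos_mul_atTop one_pos h3
    have h5 := tendsto_neg_atTop_atBot.comp h4
    refine h5.congr (fun p => by simp only [Function.comp_apply, hfdef]; ring)
end

section
/- The function v(t,p) = 1/(2p) + 1/p² - ((4-β)/(4p²)) e^{2t} - ((1+p)/p³) ln(1 + p - p e^{2t}) satisfies the first-order PDE v_t - 2p(1+p) v_p = -1 + (6 + 4p) v with initial condition v(0,p) = 1/(2p) + β/(4p²), on the domain of (t,p) with t ≥ 0, p ≠ 0 and 1 + p - p e^{2t} > 0. -/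
theorem pde_solution_critical (β : ℝ)
    (v : ℝ → ℝ → ℝ)
    (hv : ∀ t p, v t p = 1 / (2 * p) + 1 / p ^ 2 - (4 - β) / (4 * p ^ 2) * Real.exp (2 * t)
        - (1 + p) / p ^ 3 * Real.log (1 + p - p * Real.exp (2 * t))) :
    (∀ t p : ℝ, 0 ≤ t → p ≠ 0 → 0 < 1 + p - p * Real.exp (2 * t) →
      ∃ vt vp : ℝ,
        HasDerivAt (fun s => v s p) vt t ∧
        HasDerivAt (fun q => v t q) vp p ∧
        vt - 2 * p * (1 + p) * vp = -1 + (6 + 4 * p) * v t p) ∧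
    ∀ p : ℝ, p ≠ 0 → v 0 p = 1 / (2 * p) + β / (4 * p ^ 2) := by
  constructor
  · intro t p ht hp hpos
    set E : ℝ := Real.exp (2 * t) with hE
    have hEne : E ≠ 0 := Real.exp_ne_zero _
    have hargne : 1 + p - p * E ≠ 0 := ne_of_gt hpos
    -- t-derivative
    have hexp : HasDerivAt (fun s : ℝ => Real.exp (2 * s)) (Real.exp (2 * t) * 2) t := by
      have h2 : HasDerivAt (fun s : ℝ => 2 * s) 2 t := by
        simpa using (hasDerivAt_id t).const_mul 2
      simpa using h2.exp
    have harg_t : HasDerivAt (fun s : ℝ => 1 + p - p * Real.exp (2 * s))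
        (-(p * (Real.exp (2 * t) * 2))) t := (hexp.const_mul p).const_sub (1 + p)
    have hlog_t : HasDerivAt (fun s : ℝ => Real.log (1 + p - p * Real.exp (2 * s)))
        (-(p * (Real.exp (2 * t) * 2)) / (1 + p - p * E)) t := harg_t.log hargne
    have hvt : HasDerivAt (fun s => v s p)
        (-( (4 - β) / (4 * p ^ 2) * (Real.exp (2 * t) * 2))
          - (1 + p) / p ^ 3 * (-(p * (Real.exp (2 * t) * 2)) / (1 + p - p * E))) t := by
      simp only [hv]
      exact ((hexp.const_mul ((4 - β) / (4 * p ^ 2))).const_sub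
        (1 / (2 * p) + 1 / p ^ 2)).sub (hlog_t.const_mul ((1 + p) / p ^ 3))
    -- p-derivative
    have h2p : (2 : ℝ) * p ≠ 0 := by simpa using hp
    have hp2 : (4 : ℝ) * p ^ 2 ≠ 0 := by positivity
    have hp3 : p ^ 3 ≠ 0 := pow_ne_zero 3 hp
    have hT1 : HasDerivAt (fun q : ℝ => 1 / (2 * q))
        ((0 * (2 * p) - 1 * 2) / (2 * p) ^ 2) p :=
      by
      have h2 : HasDerivAt (fun q : ℝ => 2 * q) 2 p := by
        simpa using (hasDerivAt_id p).const_mul 2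
      simpa using (hasDerivAt_const p (1:ℝ)).fun_div h2 h2p
    have hT2 : HasDerivAt (fun q : ℝ => 1 / q ^ 2)
        ((0 * p ^ 2 - 1 * (2 * p ^ 1)) / (p ^ 2) ^ 2) p := by
      have := (hasDerivAt_const p (1:ℝ)).fun_div (hasDerivAt_pow 2 p) (pow_ne_zero 2 hp)
      simpa using this
    have hT3 : HasDerivAt (fun q : ℝ => (4 - β) / (4 * q ^ 2) * E)
        ((0 * (4 * p ^ 2) - (4 - β) * (4 * (2 * p ^ 1))) / (4 * p ^ 2) ^ 2 * E) p := by
      have := ((hasDerivAt_const p (4 - β)).fun_div ((hasDerivAt_pow 2 p).const_mul 4)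
        hp2).mul_const E
      simpa using this
    have harg_p : HasDerivAt (fun q : ℝ => 1 + q - q * E) (1 - 1 * E) p :=
      ((hasDerivAt_id p).const_add 1).sub ((hasDerivAt_id p).mul_const E)
    have hlog_p : HasDerivAt (fun q : ℝ => Real.log (1 + q - q * E))
        ((1 - 1 * E) / (1 + p - p * E)) p := harg_p.log hargne
    have hquot : HasDerivAt (fun q : ℝ => (1 + q) / q ^ 3)
        ((1 * p ^ 3 - (1 + p) * (3 * p ^ 2)) / (p ^ 3) ^ 2) p := by
      have := ((hasDerivAt_id p).const_add 1).fun_div (hasDerivAt_pow 3 p) hp3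
      simpa using this
    have hT4 : HasDerivAt (fun q : ℝ => (1 + q) / q ^ 3 * Real.log (1 + q - q * E))
        ((1 * p ^ 3 - (1 + p) * (3 * p ^ 2)) / (p ^ 3) ^ 2 * Real.log (1 + p - p * E)
          + (1 + p) / p ^ 3 * ((1 - 1 * E) / (1 + p - p * E))) p := hquot.mul hlog_p
    have hvp : HasDerivAt (fun q => v t q)
        (((0 * (2 * p) - 1 * 2) / (2 * p) ^ 2
          + (0 * p ^ 2 - 1 * (2 * p ^ 1)) / (p ^ 2) ^ 2)
          - (0 * (4 * p ^ 2) - (4 - β) * (4 * (2 * p ^ 1))) / (4 * p ^ 2) ^ 2 * E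
          - ((1 * p ^ 3 - (1 + p) * (3 * p ^ 2)) / (p ^ 3) ^ 2 * Real.log (1 + p - p * E)
            + (1 + p) / p ^ 3 * ((1 - 1 * E) / (1 + p - p * E)))) p := by
      simp only [hv]
      exact ((hT1.add hT2).sub hT3).sub hT4
    refine ⟨_, _, hvt, hvp, ?_⟩
    rw [hv]
    field_simp
    ring
  · intro p hp
    rw [hv]
    simp only [mul_zero, Real.exp_zero, mul_one]
    rw [show 1 + p - p = 1 by ring, Real.log_one]
    field_simp
    ring
end

section
/- The function v(t,p) = -(e^{4t}/p²) · (1 - β/4 + (1/p) ln(1 - p + p e^{-2t}) + e^{-2t}(ln(1 - p + p e^{-2t}) - 1) - (p/2) e^{-4t}) satisfies the first-order PDE v_t - 2p² e^{-2t} v_p = -e^{-2t} + (4 + 4 e^{-2t} p) v with initial condition v(0,p) = 1/(2p) + β/(4p²), on the domain t ≥ 0, p ≠ 0 and 1 - p + p e^{-2t} > 0. -/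
set_option maxHeartbeats 2000000 in
theorem pde_solution_normal (β : ℝ)
    (v : ℝ → ℝ → ℝ)
    (hv : ∀ t p, v t p = -(Real.exp (4 * t) / p ^ 2) *
        (1 - β / 4 + (1 / p) * Real.log (1 - p + p * Real.exp (-2 * t))
          + Real.exp (-2 * t) * (Real.log (1 - p + p * Real.exp (-2 * t)) - 1)
          - (p / 2) * Real.exp (-4 * t))) :
    (∀ t p : ℝ, 0 ≤ t → p ≠ 0 → 0 < 1 - p + p * Real.exp (-2 * t) →
      ∃ vt vp : ℝ,
        HasDerivAt (fun s => v s p) vt t ∧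
        HasDerivAt (fun q => v t q) vp p ∧
        vt - 2 * p ^ 2 * Real.exp (-2 * t) * vp
          = -Real.exp (-2 * t) + (4 + 4 * Real.exp (-2 * t) * p) * v t p) ∧
    ∀ p : ℝ, p ≠ 0 → v 0 p = 1 / (2 * p) + β / (4 * p ^ 2) := by
  constructor
  · intro t p ht hp hL
    have hLne : (1 - p + p * Real.exp (-2 * t)) ≠ 0 := ne_of_gt hL
    have hp2 : (p:ℝ)^2 ≠ 0 := pow_ne_zero 2 hp
    -- derivatives in t
    have hE2 : HasDerivAt (fun s : ℝ => Real.exp (-2 * s)) (Real.exp (-2 * t) * (-2)) t := by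
      have h1 : HasDerivAt (fun s : ℝ => -2 * s) (-2 : ℝ) t := by
        simpa using (hasDerivAt_id t).const_mul (-2 : ℝ)
      exact h1.exp
    have hE4 : HasDerivAt (fun s : ℝ => Real.exp (4 * s)) (Real.exp (4 * t) * 4) t := by
      have h1 : HasDerivAt (fun s : ℝ => 4 * s) (4 : ℝ) t := by
        simpa using (hasDerivAt_id t).const_mul (4 : ℝ)
      exact h1.exp
    have hEm4 : HasDerivAt (fun s : ℝ => Real.exp (-4 * s)) (Real.exp (-4 * t) * (-4)) t := by
      have h1 : HasDerivAt (fun s : ℝ => -4 * s) (-4 : ℝ) t := by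
        simpa using (hasDerivAt_id t).const_mul (-4 : ℝ)
      exact h1.exp
    have hLt : HasDerivAt (fun s : ℝ => 1 - p + p * Real.exp (-2 * s))
        (p * (Real.exp (-2 * t) * (-2))) t := (hE2.const_mul p).const_add (1 - p)
    have hlogt : HasDerivAt (fun s : ℝ => Real.log (1 - p + p * Real.exp (-2 * s)))
        (p * (Real.exp (-2 * t) * (-2)) / (1 - p + p * Real.exp (-2 * t))) t := hLt.log hLne
    have hft : HasDerivAt (fun s : ℝ => 1 - β / 4
          + (1 / p) * Real.log (1 - p + p * Real.exp (-2 * s))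
          + Real.exp (-2 * s) * (Real.log (1 - p + p * Real.exp (-2 * s)) - 1)
          - (p / 2) * Real.exp (-4 * s))
        ((1 / p) * (p * (Real.exp (-2 * t) * (-2)) / (1 - p + p * Real.exp (-2 * t)))
          + (Real.exp (-2 * t) * (-2) * (Real.log (1 - p + p * Real.exp (-2 * t)) - 1)
            + Real.exp (-2 * t) * (p * (Real.exp (-2 * t) * (-2)) / (1 - p + p * Real.exp (-2 * t))))
          - (p / 2) * (Real.exp (-4 * t) * (-4))) t :=
      (((hlogt.const_mul (1 / p)).const_add (1 - β / 4)).add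
        (hE2.mul (hlogt.sub_const 1))).sub (hEm4.const_mul (p / 2))
    have hgt : HasDerivAt (fun s : ℝ => -(Real.exp (4 * s) / p ^ 2))
        (-(Real.exp (4 * t) * 4 / p ^ 2)) t := (hE4.div_const (p ^ 2)).neg
    have hdt := hgt.mul hft
    -- derivatives in p
    have hLp : HasDerivAt (fun q : ℝ => 1 - q + q * Real.exp (-2 * t))
        (-1 + 1 * Real.exp (-2 * t)) p :=
      (((hasDerivAt_id p).const_sub 1).add ((hasDerivAt_id p).mul_const (Real.exp (-2 * t))))
    have hlogp : HasDerivAt (fun q : ℝ => Real.log (1 - q + q * Real.exp (-2 * t)))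
        ((-1 + 1 * Real.exp (-2 * t)) / (1 - p + p * Real.exp (-2 * t))) p := hLp.log hLne
    have h1q : HasDerivAt (fun q : ℝ => 1 / q) (-(1 / p ^ 2)) p := by
      simpa [one_div] using hasDerivAt_inv hp
    have hq2 : HasDerivAt (fun q : ℝ => q ^ 2) (2 * p) p := by
      simpa using hasDerivAt_pow 2 p
    have hgp : HasDerivAt (fun q : ℝ => -(Real.exp (4 * t) / q ^ 2))
        (-(Real.exp (4 * t) * (-(2 * p) / (p ^ 2) ^ 2))) p := by
      have := ((hq2.inv hp2).const_mul (Real.exp (4 * t))).neg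
      simp only [div_eq_mul_inv]
      convert this using 1 <;> first | rfl | (funext q; simp) | simp
    have hfp : HasDerivAt (fun q : ℝ => 1 - β / 4
          + (1 / q) * Real.log (1 - q + q * Real.exp (-2 * t))
          + Real.exp (-2 * t) * (Real.log (1 - q + q * Real.exp (-2 * t)) - 1)
          - (q / 2) * Real.exp (-4 * t))
        ((-(1 / p ^ 2) * Real.log (1 - p + p * Real.exp (-2 * t))
            + (1 / p) * ((-1 + 1 * Real.exp (-2 * t)) / (1 - p + p * Real.exp (-2 * t))))
          + Real.exp (-2 * t) * ((-1 + 1 * Real.exp (-2 * t)) / (1 - p + p * Real.exp (-2 * t)))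
          - 1 / 2 * Real.exp (-4 * t)) p :=
      (((h1q.mul hlogp).const_add (1 - β / 4)).add
        ((hlogp.sub_const 1).const_mul (Real.exp (-2 * t)))).sub
        (((hasDerivAt_id p).div_const 2).mul_const (Real.exp (-4 * t)))
    have hdp := hgp.mul hfp
    have hdt' := hdt.congr_of_eventuallyEq
      (Filter.Eventually.of_forall fun s => hv s p)
    have hdp' := hdp.congr_of_eventuallyEq
      (Filter.Eventually.of_forall fun q => hv t q)
    refine ⟨_, _, hdt', hdp', ?_⟩
    rw [hv]
    have hu : Real.exp (-2 * t) ≠ 0 := Real.exp_ne_zero _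
    have hm4 : Real.exp (-4 * t) = Real.exp (-2 * t) * Real.exp (-2 * t) := by
      rw [← Real.exp_add]; ring_nf
    have h4 : Real.exp (4 * t) = 1 / (Real.exp (-2 * t) * Real.exp (-2 * t)) := by
      rw [eq_div_iff (by positivity), ← Real.exp_add, ← Real.exp_add]
      norm_num
      ring
    have hpL : p - p ^ 2 + p ^ 2 * Real.exp (-2 * t) ≠ 0 := by
      have h := mul_ne_zero hp hLne
      ring_nf at h ⊢
      convert h using 2
    have hL2 : (1 - p + p * Real.exp (-(t * 2))) ≠ 0 := by
      rw [show -(t * 2) = -2 * t by ring]; exact hLne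
    have hu2 : Real.exp (-(t * 2)) ≠ 0 := Real.exp_ne_zero _
    have hpL2 : p - p ^ 2 + p ^ 2 * Real.exp (-(t * 2)) ≠ 0 := by
      intro h0
      exact mul_ne_zero hp hL2 (by linear_combination h0)
    rw [hm4, h4]
    field_simp [mul_ne_zero hp hLne, hLne, hp, hu]
    ring_nf
    field_simp [hL2, hu2, hpL2]
    ring
  · intro p hp
    rw [hv]
    have h0 : (1:ℝ) - p + p * Real.exp (-2 * 0) = 1 := by
      norm_num
    rw [h0]
    norm_num [Real.exp_zero]
    field_simp
    ring
end

section
/- The derivative v₀'(p) = -(p+4)/(2p³) of v₀(p) = (p+2)/(2p²) is nonzero for every p in the open upper half-disc {(p+2)² + q² < 4, q > 0} (where p denotes the complex variable), so v₀ is locally injective (conformal) there; and in fact v₀ restricted to this half-disc is injective. -/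
theorem v0_conformal_on_halfdisc :
    (∀ η : ℂ, ‖η + 2‖ < 2 → 0 < η.im →
      HasDerivAt (fun z : ℂ => (z + 2) / (2 * z ^ 2)) (-(η + 4) / (2 * η ^ 3)) η ∧
      -(η + 4) / (2 * η ^ 3) ≠ 0) ∧
    Set.InjOn (fun z : ℂ => (z + 2) / (2 * z ^ 2))
      {η : ℂ | ‖η + 2‖ < 2 ∧ 0 < η.im} := by
  constructor
  · intro η h1 h2
    have hη : η ≠ 0 := by intro h; simp [h] at h2
    have hη3 : (2 : ℂ) * η ^ 2 ≠ 0 := by simp [hη]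
    constructor
    · have hn : HasDerivAt (fun z : ℂ => z + 2) 1 η := (hasDerivAt_id η).add_const 2
      have hdd : HasDerivAt (fun z : ℂ => 2 * z ^ 2) (2 * (2 * η)) η := by
        simpa using ((hasDerivAt_pow 2 η).const_mul (2 : ℂ))
      have hd := hn.div hdd hη3
      refine hd.congr_deriv ?_
      rw [div_eq_div_iff (pow_ne_zero 2 hη3) (by simp [hη] : (2 : ℂ) * η ^ 3 ≠ 0)]
      ring
    · have h4 : η + 4 ≠ 0 := by
        intro h
        have : η = -4 := by linear_combination h
        rw [this] at h2; norm_num at h2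
      exact div_ne_zero (neg_ne_zero.mpr h4) (by simp [hη])
  · intro a ha b hb hab
    obtain ⟨ha1, ha2⟩ := ha
    obtain ⟨hb1, hb2⟩ := hb
    have ha0 : a ≠ 0 := by intro h; simp [h] at ha2
    have hb0 : b ≠ 0 := by intro h; simp [h] at hb2
    simp only at hab
    field_simp at hab
    have key : (a - b) * ((a + 2) * (b + 2) - 4) = 0 := by linear_combination (-(1:ℂ)) * hab
    have h4 : (a + 2) * (b + 2) - 4 ≠ 0 := by
      intro h
      have he : (a + 2) * (b + 2) = 4 := by linear_combination h
      have habs : ‖(a + 2) * (b + 2)‖ < 4 := by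
        rw [norm_mul]
        have h0a : 0 ≤ ‖a + 2‖ := norm_nonneg _
        have h0b : 0 ≤ ‖b + 2‖ := norm_nonneg _
        nlinarith
      rw [he] at habs
      norm_num at habs
    have := mul_eq_zero.mp key
    rcases this with h | h
    · exact sub_eq_zero.mp h
    · exact absurd h h4
end

section
/- The cubic equation 2ζ³ - ζ - 2 = 0, equivalently the fixed-point equation v₀(ζ) = (ζ+2)/(2ζ²) = ζ, has exactly one root ζ₀ in the open upper half-plane, and this root lies in the open upper half-disc {η : |η+2| < 2, Im η > 0}. -/
theorem cubic_unique_root_upper_halfplane :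
    (∃! ζ : ℂ, 0 < ζ.im ∧ 2 * ζ ^ 3 - ζ - 2 = 0) ∧
    ∀ ζ : ℂ, 0 < ζ.im → 2 * ζ ^ 3 - ζ - 2 = 0 → ‖ζ + 2‖ < 2 := by
  -- real root r of 2r³ - r - 2 = 0 in [1, 1.2]
  obtain ⟨r, hrmem, hr⟩ :=
    intermediate_value_Icc (by norm_num : (1:ℝ) ≤ 1.2)
      (((continuous_const.mul (continuous_pow 3)).sub continuous_id').sub
        continuous_const).continuousOn
      (show (0:ℝ) ∈ Set.Icc (2*(1:ℝ)^3 - 1 - 2) (2*(1.2:ℝ)^3 - 1.2 - 2) by norm_num)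
  obtain ⟨hr1, hr2⟩ := hrmem
  simp only [Pi.sub_apply, Pi.mul_apply] at hr
  have hrpos : 0 < r := by linarith
  have hdisc : 0 < 4 / r - r ^ 2 := by
    rw [lt_sub_iff_add_lt, zero_add, lt_div_iff₀ hrpos]
    nlinarith
  set b : ℝ := Real.sqrt (4 / r - r ^ 2) / 2 with hbdef
  have hbpos : 0 < b := by positivity
  have hb2 : b ^ 2 = (4 / r - r ^ 2) / 4 := by
    rw [hbdef, div_pow, Real.sq_sqrt hdisc.le]; ring
  have hrC : 2 * (r:ℂ) ^ 3 - r - 2 = 0 := by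
    have h : ((2 * r ^ 3 - r - 2 : ℝ) : ℂ) = 0 := by rw [hr]; norm_num
    push_cast at h
    linear_combination h
  have hb2C : (b:ℂ) ^ 2 = (4 / r - (r:ℂ) ^ 2) / 4 := by
    have h : ((b ^ 2 : ℝ) : ℂ) = (((4 / r - r ^ 2) / 4 : ℝ) : ℂ) := by rw [hb2]
    push_cast at h
    linear_combination h
  set z : ℂ := -(r:ℂ)/2 + (b:ℂ) * Complex.I with hz
  have hzim : z.im = b := by simp [hz]
  have hI : Complex.I ^ 2 = -1 := Complex.I_sq
  have hcne : (r:ℂ) ≠ 0 := Complex.ofReal_ne_zero.mpr hrpos.ne'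
  have hb4 : 4 * (r:ℂ) * (b:ℂ) ^ 2 = 4 - (r:ℂ) ^ 3 := by
    rw [hb2C]; field_simp
  -- factorization for all ζ
  have hfact : ∀ ζ : ℂ, 2 * ζ ^ 3 - ζ - 2 =
      2 * (ζ - r) * (ζ - z) * (ζ - (-(r:ℂ)/2 - b * Complex.I)) := by
    intro ζ
    rw [hz]
    apply mul_left_cancel₀ hcne
    linear_combination ζ * hrC - (ζ - (r:ℂ)) / 2 * hb4 +
      2 * (r:ℂ) * (ζ - r) * (b:ℂ) ^ 2 * hI
  have hzroot : 2 * z ^ 3 - z - 2 = 0 := by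
    rw [hfact z, sub_self]; ring
  have huniq : ∀ ζ : ℂ, 0 < ζ.im → 2 * ζ ^ 3 - ζ - 2 = 0 → ζ = z := by
    intro ζ him heq
    rw [hfact ζ] at heq
    rcases mul_eq_zero.mp heq with h | h
    · rcases mul_eq_zero.mp h with h' | h'
      · rcases mul_eq_zero.mp h' with h'' | h''
        · norm_num at h''
        · exfalso
          have : ζ = (r:ℂ) := sub_eq_zero.mp h''
          rw [this] at him
          simp at him
      · exact sub_eq_zero.mp h'
    · exfalso
      have hζ : ζ = -(r:ℂ)/2 - b * Complex.I := sub_eq_zero.mp h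
      have : ζ.im = -b := by rw [hζ]; simp
      rw [this] at him
      linarith
  constructor
  · exact ⟨z, ⟨by rw [hzim]; exact hbpos, hzroot⟩, fun ζ hζ => huniq ζ hζ.1 hζ.2⟩
  · intro ζ him heq
    rw [huniq ζ him heq]
    have hre : (z + 2).re = 2 - r / 2 := by
      simp [hz]
      ring
    have him2 : (z + 2).im = b := by simp [hz]
    have habs : ‖z + 2‖ ^ 2 = 4 - 2 * r + 1 / r := by
      rw [Complex.sq_norm, Complex.normSq_apply, hre, him2]
      linear_combination hb2
    have h4 : ‖z + 2‖ ^ 2 < 4 := by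
      rw [habs]
      have : 1 / r ≤ 1 := by
        rw [div_le_one hrpos]; linarith
      linarith
    nlinarith [norm_nonneg (z + 2)]
end

section
/- The function ρ(λ) = (1/(4π)) · √(4(−λ) − 1)/(−λ), supported on λ ∈ (−∞, −1/4), satisfies ∫_{−∞}^{−1/4} ρ(λ)/λ dλ = −1/2. -/
open MeasureTheory Set Real Filter

noncomputable def Hfun (t : ℝ) : ℝ :=
  1 / (4 * Real.pi) * (Real.sqrt (4 * t - 1) / t - 4 * Real.arctan (Real.sqrt (4 * t - 1)))

lemma Hderiv {t : ℝ} (ht : (1/4 : ℝ) < t) :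
    HasDerivAt Hfun ((1 / (4 * Real.pi) * Real.sqrt (4 * t - 1) / t) / (-t)) t := by
  have ht0 : (0:ℝ) < t := lt_trans (by norm_num) ht
  have hpos : 0 < 4 * t - 1 := by linarith
  have hs0 : 0 < Real.sqrt (4 * t - 1) := Real.sqrt_pos.mpr hpos
  have hsq : Real.sqrt (4 * t - 1) ^ 2 = 4 * t - 1 := Real.sq_sqrt hpos.le
  have h1 : HasDerivAt (fun t : ℝ => 4 * t - 1) 4 t := by
    simpa using ((hasDerivAt_id t).const_mul 4).sub_const 1
  have hsqrt : HasDerivAt (fun t : ℝ => Real.sqrt (4 * t - 1))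
      (4 / (2 * Real.sqrt (4 * t - 1))) t := h1.sqrt hpos.ne'
  have hdiv : HasDerivAt (fun t : ℝ => Real.sqrt (4 * t - 1) / t)
      ((4 / (2 * Real.sqrt (4 * t - 1)) * t - Real.sqrt (4 * t - 1) * 1) / t ^ 2) t :=
    hsqrt.div (hasDerivAt_id t) ht0.ne'
  have harc : HasDerivAt (fun t : ℝ => Real.arctan (Real.sqrt (4 * t - 1)))
      (1 / (1 + Real.sqrt (4 * t - 1) ^ 2) * (4 / (2 * Real.sqrt (4 * t - 1)))) t :=
    hsqrt.arctan
  have hsum := (hdiv.sub (harc.const_mul 4)).const_mul (1 / (4 * Real.pi))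
  convert hsum using 1
  all_goals try rfl
  rw [hsq]
  have hπ : Real.pi ≠ 0 := Real.pi_ne_zero
  field_simp
  nlinarith [Real.sq_sqrt hpos.le, hs0, sq_nonneg t, Real.pi_pos]

lemma sqrt_tendsto_atTop : Tendsto Real.sqrt atTop atTop := by
  apply (tendsto_rpow_atTop (by norm_num : (0:ℝ) < 1/2)).congr'
  filter_upwards [eventually_ge_atTop (0:ℝ)] with x hx
  exact (Real.sqrt_eq_rpow x).symm

lemma Htendsto : Tendsto Hfun atTop (nhds (-1/2 : ℝ)) := by
  have hlin : Tendsto (fun t : ℝ => 4 * t - 1) atTop atTop := by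
    have := tendsto_atTop_add_const_right atTop (-1 : ℝ)
      (tendsto_id.const_mul_atTop (by norm_num : (0:ℝ) < 4))
    simpa [sub_eq_add_neg] using this
  have hst : Tendsto (fun t : ℝ => Real.sqrt (4 * t - 1)) atTop atTop :=
    sqrt_tendsto_atTop.comp hlin
  have hfrac : Tendsto (fun t : ℝ => (4 * t - 1) / t ^ 2) atTop (nhds 0) := by
    have h4 : Tendsto (fun t : ℝ => 4 / t) atTop (nhds 0) :=
      tendsto_const_nhds.div_atTop tendsto_id
    have h5 : Tendsto (fun t : ℝ => 1 / t ^ 2) atTop (nhds 0) :=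
      tendsto_const_nhds.div_atTop (tendsto_pow_atTop two_ne_zero)
    have h6 := h4.sub h5
    rw [sub_zero] at h6
    apply h6.congr'
    filter_upwards [eventually_gt_atTop (0:ℝ)] with t ht
    field_simp
  have h1 : Tendsto (fun t : ℝ => Real.sqrt (4 * t - 1) / t) atTop (nhds 0) := by
    have h7 := (Real.continuous_sqrt.tendsto 0).comp hfrac
    rw [Real.sqrt_zero] at h7
    apply h7.congr'
    filter_upwards [eventually_gt_atTop (1/4 : ℝ)] with t ht
    have ht0 : (0:ℝ) < t := lt_trans (by norm_num) ht
    have h4 : (0:ℝ) ≤ 4 * t - 1 := by linarith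
    simp only [Function.comp]
    rw [Real.sqrt_div h4, Real.sqrt_sq ht0.le]
  have h2 : Tendsto (fun t : ℝ => Real.arctan (Real.sqrt (4 * t - 1))) atTop
      (nhds (Real.pi / 2)) :=
    (tendsto_nhds_of_tendsto_nhdsWithin Real.tendsto_arctan_atTop).comp hst
  have h3 := (h1.sub (h2.const_mul 4)).const_mul (1 / (4 * Real.pi))
  have hval : (-1/2 : ℝ) = 1 / (4 * Real.pi) * (0 - 4 * (Real.pi / 2)) := by
    have hπ : Real.pi ≠ 0 := Real.pi_ne_zero
    field_simp
    ring
  rw [hval]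
  exact h3

theorem rho_integral :
    ∫ l in Set.Iio (-1 / 4 : ℝ),
      (1 / (4 * Real.pi) * Real.sqrt (-4 * l - 1) / (-l)) / l = -1 / 2 := by
  have hcont : ContinuousWithinAt Hfun (Set.Ici (1/4 : ℝ)) (1/4) := by
    have hs : ContinuousAt (fun t : ℝ => Real.sqrt (4 * t - 1)) (1/4) :=
      (Real.continuous_sqrt.comp (by continuity)).continuousAt
    exact (continuousAt_const.mul ((hs.div continuousAt_id (by norm_num)).sub
      (continuousAt_const.mul (Real.continuous_arctan.continuousAt.comp hs)))).continuousWithinAt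
  have hneg : ∀ x ∈ Set.Ioi (1/4 : ℝ),
      (1 / (4 * Real.pi) * Real.sqrt (4 * x - 1) / x) / (-x) ≤ 0 := by
    intro x hx
    have hx0 : (0:ℝ) < x := lt_trans (by norm_num) hx
    have hnum : 0 ≤ 1 / (4 * Real.pi) * Real.sqrt (4 * x - 1) / x := by positivity
    rw [div_neg, neg_nonpos]
    positivity
  have hIoi := integral_Ioi_of_hasDerivAt_of_nonpos hcont (fun x hx => Hderiv hx) hneg Htendsto
  have hH0 : Hfun (1/4) = 0 := by
    simp [Hfun]
  rw [hH0, sub_zero] at hIoi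
  have hcomp := integral_comp_neg_Ioi (1/4 : ℝ)
    (fun l => (1 / (4 * Real.pi) * Real.sqrt (-4 * l - 1) / (-l)) / l)
  rw [integral_Iic_eq_integral_Iio] at hcomp
  rw [show (-(1/4:ℝ)) = -1/4 by norm_num] at hcomp
  rw [← hcomp]
  rw [show (fun x : ℝ => (1 / (4 * Real.pi) * Real.sqrt (-4 * (-x) - 1) / (-(-x))) / (-x))
      = (fun x : ℝ => (1 / (4 * Real.pi) * Real.sqrt (4 * x - 1) / x) / (-x)) from
    funext fun x => by simp only [neg_neg]; rw [show -4 * -x - 1 = 4 * x - 1 by ring]]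
  rw [hIoi]
end
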